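/- Let e₁ : M₁ → H and e₂ : M₂ → H be bounded injective linear maps between Hilbert spaces, and define N = range e₁ ∩ range e₂ with norm ‖ζ‖²_N = ‖e₁⁻¹ζ‖²_{M₁} + ‖e₂⁻¹ζ‖²_{M₂}. Then N is complete (a Hilbert space), and the maps f₁(ζ) = e₁⁻¹ζ and f₂(ζ) = e₂⁻¹ζ are contractive injective linear maps from N to M₁ and M₂ respectively. -/

import Mathlib

/-- Let `e₁ : M₁ → H`, `e₂ : M₂ → H` be bounded injective linear maps between
Hilbert spaces and let `N = range e₁ ∩ range e₂` carry the norm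
`‖ζ‖²_N = ‖e₁⁻¹ ζ‖² + ‖e₂⁻¹ ζ‖²`.  Realizing `N` as the set of pairs `(ξ, η)` in the Hilbert
direct sum `M₁ ⊕₂ M₂` with `e₁ ξ = e₂ η` (whose inherited norm is exactly `‖ξ‖² + ‖η‖²`), `N` is
closed — hence complete, a Hilbert space — and the coordinate maps `f₁(ζ) = e₁⁻¹ζ`,
`f₂(ζ) = e₂⁻¹ζ` are contractive and injective. -/
theorem intersection_space_complete_and_contractive
    {M₁ M₂ H : Type*}
    [NormedAddCommGroup M₁] [InnerProductSpace ℂ M₁] [CompleteSpace M₁]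
    [NormedAddCommGroup M₂] [InnerProductSpace ℂ M₂] [CompleteSpace M₂]
    [NormedAddCommGroup H] [InnerProductSpace ℂ H] [CompleteSpace H]
    (e₁ : M₁ →L[ℂ] H) (e₂ : M₂ →L[ℂ] H)
    (h₁ : Function.Injective e₁) (h₂ : Function.Injective e₂) :
    IsClosed {p : WithLp 2 (M₁ × M₂) |
        e₁ (WithLp.equiv 2 (M₁ × M₂) p).1 = e₂ (WithLp.equiv 2 (M₁ × M₂) p).2} ∧
    (∀ p : WithLp 2 (M₁ × M₂),
      ‖(WithLp.equiv 2 (M₁ × M₂) p).1‖ ≤ ‖p‖ ∧ ‖(WithLp.equiv 2 (M₁ × M₂) p).2‖ ≤ ‖p‖) ∧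
    (∀ (ξ ξ' : M₁) (η η' : M₂), e₁ ξ = e₂ η → e₁ ξ' = e₂ η' → ξ = ξ' → η = η') ∧
    (∀ (ξ ξ' : M₁) (η η' : M₂), e₁ ξ = e₂ η → e₁ ξ' = e₂ η' → η = η' → ξ = ξ') := by
  refine ⟨?_, ?_, ?_, ?_⟩
  · have hc : Continuous fun p : WithLp 2 (M₁ × M₂) =>
        e₁ (WithLp.equiv 2 (M₁ × M₂) p).1 - e₂ (WithLp.equiv 2 (M₁ × M₂) p).2 := by
      have hce : Continuous (WithLp.equiv 2 (M₁ × M₂)) := WithLp.prod_continuous_ofLp _ _ _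
      exact ((e₁.continuous.comp (continuous_fst.comp hce)).sub
        (e₂.continuous.comp (continuous_snd.comp hce)))
    have : {p : WithLp 2 (M₁ × M₂) |
        e₁ (WithLp.equiv 2 (M₁ × M₂) p).1 = e₂ (WithLp.equiv 2 (M₁ × M₂) p).2} =
        (fun p : WithLp 2 (M₁ × M₂) =>
          e₁ (WithLp.equiv 2 (M₁ × M₂) p).1 - e₂ (WithLp.equiv 2 (M₁ × M₂) p).2) ⁻¹' {0} := by
      ext p; simp [sub_eq_zero]
    rw [this]
    exact (isClosed_singleton).preimage hc
  · intro p
    have hsq := WithLp.prod_norm_sq_eq_of_L2 p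
    show ‖p.fst‖ ≤ ‖p‖ ∧ ‖p.snd‖ ≤ ‖p‖
    have hsq2 := WithLp.prod_norm_sq_eq_of_L2 p
    have h1 : ‖p.fst‖ ^ 2 ≤ ‖p‖ ^ 2 := by nlinarith [sq_nonneg ‖p.snd‖]
    have h2 : ‖p.snd‖ ^ 2 ≤ ‖p‖ ^ 2 := by nlinarith [sq_nonneg ‖p.fst‖]
    exact ⟨(pow_le_pow_iff_left₀ (norm_nonneg _) (norm_nonneg _) two_ne_zero).mp h1,
      (pow_le_pow_iff_left₀ (norm_nonneg _) (norm_nonneg _) two_ne_zero).mp h2⟩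
  · intro ξ ξ' η η' hξ hξ' h
    exact h₂ (by rw [← hξ, ← hξ', h])
  · intro ξ ξ' η η' hξ hξ' h
    exact h₁ (by rw [hξ, hξ', h])
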